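/- With the notation of the martingale decomposition of the variance: for ξ = f(X₁,…,X_n) square-integrable with X_i independent, letting E_k denote conditional expectation integrating out only X_k, one has Var(ξ) ≤ ∑_{k=1}^n E[ |ξ - E_k[ξ]|² ]. -/

import Mathlib

open MeasureTheory ProbabilityTheory

/-- The σ-algebra generated by all the variables `X i` with `i ≠ k`. -/
def exceptSigma {Ω : Type*} {n : ℕ} (X : Fin n → Ω → ℝ) (k : Fin n) : MeasurableSpace Ω :=
  ⨆ i : Fin n, ⨆ _ : i ≠ k, MeasurableSpace.comap (X i) inferInstance

/-- The σ-algebra generated by all the variables `X i`. -/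
def allSigma {Ω : Type*} {n : ℕ} (X : Fin n → Ω → ℝ) : MeasurableSpace Ω :=
  ⨆ i : Fin n, MeasurableSpace.comap (X i) inferInstance

section Aux

variable {Ω : Type*} {m0 : MeasurableSpace Ω} {μ : Measure Ω}

/-- For an `L²` function, the conditional expectation coincides a.e. with `condexpL2`. -/
lemma condexp_ae_eq_condexpL2'' [IsProbabilityMeasure μ] {m : MeasurableSpace Ω} (hm : m ≤ m0)
    {f : Ω → ℝ} (hf : MemLp f 2 μ) :
    μ[f | m] =ᵐ[μ] ((condExpL2 ℝ ℝ hm (hf.toLp f) : Lp ℝ 2 μ) : Ω → ℝ) := by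
  letI : MeasurableSpace Ω := m0
  refine (ae_eq_condExp_of_forall_setIntegral_eq hm (hf.integrable one_le_two)
    (fun s _ _ => (integrableOn_condExpL2_of_measure_ne_top hm (measure_ne_top μ s) _))
    (fun s hs _ => ?_) (aestronglyMeasurable_condExpL2 hm _)).symm
  rw [integral_condExpL2_eq hm _ hs (measure_ne_top μ s)]
  exact setIntegral_congr_ae (hm s hs) ((hf.coeFn_toLp).mono fun x hx _ => hx)

lemma memℒp_two_condexp [IsProbabilityMeasure μ] {m : MeasurableSpace Ω} (hm : m ≤ m0)
    {f : Ω → ℝ} (hf : MemLp f 2 μ) : MemLp (μ[f | m]) 2 μ :=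
  (Lp.memLp _).ae_eq (condexp_ae_eq_condexpL2'' hm hf).symm

lemma norm_sq_eq_integral_sq (g : Lp ℝ 2 μ) : ‖g‖ ^ 2 = ∫ ω, (g ω) ^ 2 ∂μ := by
  rw [← real_inner_self_eq_norm_sq, L2.inner_def]
  refine integral_congr_ae (Filter.Eventually.of_forall fun ω => ?_)
  simp [RCLike.inner_apply, sq]

/-- Key independence lemma: if `f` is `G`-measurable, `F ≤ G`, and `H` is independent of `G`,
then conditioning on `F ⊔ H` is the same as conditioning on `F`. -/
lemma condexp_sup_indep' [IsProbabilityMeasure μ] {F G H : MeasurableSpace Ω}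
    (hG : G ≤ m0) (hH : H ≤ m0) (hFG : F ≤ G) (hindep : Indep G H μ) {f : Ω → ℝ}
    (hf_int : Integrable f μ) (hf : StronglyMeasurable[G] f) :
    μ[f | F ⊔ H] =ᵐ[μ] μ[f | F] := by
  letI : MeasurableSpace Ω := m0
  have hF : F ≤ m0 := hFG.trans hG
  have hFH : F ⊔ H ≤ m0 := sup_le hF hH
  have key : ∀ g : Ω → ℝ, Integrable g μ → StronglyMeasurable[G] g →
      ∀ a b : Set Ω, MeasurableSet[F] a → MeasurableSet[H] b →
      ∫ x in a ∩ b, g x ∂μ = (μ b).toReal * ∫ x in a, g x ∂μ := by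
    intro g hg_int hg a b ha hb
    have hgu : StronglyMeasurable[G] (a.indicator g) := hg.indicator (hFG a ha)
    have hvb : StronglyMeasurable[H] (b.indicator (fun _ => (1 : ℝ))) :=
      stronglyMeasurable_const.indicator hb
    have hprod : ∀ x, (a ∩ b).indicator g x
        = a.indicator g x * b.indicator (fun _ => (1 : ℝ)) x := by
      intro x
      by_cases hxa : x ∈ a <;> by_cases hxb : x ∈ b <;>
        simp [Set.indicator_apply, hxa, hxb, Set.mem_inter_iff]
    have hIndepF : IndepFun (a.indicator g) (b.indicator (fun _ => (1 : ℝ))) μ := by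
      rw [indepFun_iff_measure_inter_preimage_eq_mul]
      intro s t hs ht
      exact ((Indep_iff _ _ _).mp hindep) _ _ (hgu.measurable hs) (hvb.measurable ht)
    have hint_u : Integrable (a.indicator g) μ := hg_int.indicator (hF a ha)
    have hint_v : Integrable (b.indicator (fun _ => (1 : ℝ))) μ :=
      (integrable_const 1).indicator (hH b hb)
    calc ∫ x in a ∩ b, g x ∂μ = ∫ x, (a ∩ b).indicator g x ∂μ :=
          (integral_indicator ((hF a ha).inter (hH b hb))).symm
      _ = ∫ x, a.indicator g x * b.indicator (fun _ => (1 : ℝ)) x ∂μ := by simp_rw [hprod]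
      _ = (∫ x, a.indicator g x ∂μ) * ∫ x, b.indicator (fun _ => (1 : ℝ)) x ∂μ :=
          hIndepF.integral_mul_eq_mul_integral hint_u.aestronglyMeasurable hint_v.aestronglyMeasurable
      _ = (μ b).toReal * ∫ x in a, g x ∂μ := by
          rw [integral_indicator (hF a ha), integral_indicator_const _ (hH b hb)]
          simp [mul_comm, Measure.real]
  refine (ae_eq_condExp_of_forall_setIntegral_eq hFH hf_int
    (fun s _ _ => integrable_condExp.integrableOn)
    (fun s hs _ => ?_)
    ((stronglyMeasurable_condExp (m := F) (f := f) (μ := μ)).mono (le_sup_left : F ≤ F ⊔ H)).aestronglyMeasurable).symm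
  set S : Set (Set Ω) :=
    {t | ∃ a b : Set Ω, MeasurableSet[F] a ∧ MeasurableSet[H] b ∧ t = a ∩ b} with hS
  have h_eq : (F ⊔ H) = MeasurableSpace.generateFrom S := by
    refine le_antisymm (sup_le ?_ ?_) (MeasurableSpace.generateFrom_le ?_)
    · intro t ht
      exact MeasurableSpace.measurableSet_generateFrom
        ⟨t, Set.univ, ht, MeasurableSet.univ, (Set.inter_univ t).symm⟩
    · intro t ht
      exact MeasurableSpace.measurableSet_generateFrom
        ⟨Set.univ, t, MeasurableSet.univ, ht, (Set.univ_inter t).symm⟩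
    · rintro t ⟨a, b, ha, hb, rfl⟩
      exact MeasurableSet.inter ((le_sup_left : F ≤ F ⊔ H) a ha)
        ((le_sup_right : H ≤ F ⊔ H) b hb)
  have h_pi : IsPiSystem S := by
    rintro t1 ⟨a1, b1, ha1, hb1, rfl⟩ t2 ⟨a2, b2, ha2, hb2, rfl⟩ -
    exact ⟨a1 ∩ a2, b1 ∩ b2, ha1.inter ha2, hb1.inter hb2, by
      rw [Set.inter_inter_inter_comm]⟩
  have hcond_int : Integrable (μ[f|F]) μ := integrable_condExp
  have hcondG : StronglyMeasurable[G] (μ[f|F]) := stronglyMeasurable_condExp.mono hFG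
  have main : ∀ t, MeasurableSet[F ⊔ H] t →
      ∫ x in t, (μ[f|F]) x ∂μ = ∫ x in t, f x ∂μ := by
    refine fun t ht => @MeasurableSpace.induction_on_inter Ω (F ⊔ H)
      (fun t _ => ∫ x in t, (μ[f|F]) x ∂μ = ∫ x in t, f x ∂μ) S h_eq h_pi ?_ ?_ ?_ ?_ t ht
    · simp
    · rintro t ⟨a, b, ha, hb, rfl⟩
      rw [key _ hcond_int hcondG a b ha hb, key _ hf_int hf a b ha hb,
        setIntegral_condExp hF hf_int ha]
    · intro t htm hind
      have ht' : MeasurableSet t := hFH t htm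
      have h1 := integral_add_compl ht' hcond_int
      have h2 := integral_add_compl ht' hf_int
      have h3 : ∫ x, (μ[f|F]) x ∂μ = ∫ x, f x ∂μ := integral_condExp hF
      linarith
    · intro g hdisj hgm hg
      rw [integral_iUnion (fun i => hFH _ (hgm i)) hdisj hcond_int.integrableOn,
        integral_iUnion (fun i => hFH _ (hgm i)) hdisj hf_int.integrableOn]
      exact tsum_congr hg
  exact main s hs

end Aux

/-- Efron–Stein type martingale bound: for a square-integrable function
`ξ = f(X₁,…,Xₙ)` of independent random variables,
`Var(ξ) ≤ ∑_{k=1}^n E[|ξ - E_k[ξ]|²]`, where `E_k` is the conditional expectation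
integrating out only `X_k` (i.e. conditioning on all `X_i`, `i ≠ k`). -/
theorem variance_le_sum_martingale {Ω : Type*} {m0 : MeasurableSpace Ω}
    (μ : Measure Ω) [IsProbabilityMeasure μ] (n : ℕ) (X : Fin n → Ω → ℝ)
    (hmeas : ∀ i, Measurable (X i))
    (hindep : iIndepFun X μ)
    (ξ : Ω → ℝ) (hξ : MemLp ξ 2 μ)
    (hξmeas : StronglyMeasurable[allSigma X] ξ) :
    variance ξ μ ≤
      ∑ k : Fin n, ∫ ω, |ξ ω - (μ[ξ | exceptSigma X k]) ω| ^ 2 ∂μ := by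
  classical
  have hξ_int : Integrable ξ μ := hξ.integrable one_le_two
  set F : ℕ → MeasurableSpace Ω :=
    fun t => ⨆ i : Fin n, ⨆ _ : (i : ℕ) < t, MeasurableSpace.comap (X i) inferInstance with hFdef
  have hcomap_le : ∀ i, MeasurableSpace.comap (X i) inferInstance ≤ m0 :=
    fun i => (hmeas i).comap_le
  have hF_le : ∀ t, F t ≤ m0 := fun t => iSup₂_le fun i _ => hcomap_le i
  have hG_le : ∀ k : Fin n, exceptSigma X k ≤ m0 := fun k => iSup₂_le fun i _ => hcomap_le i
  have hF_mono : ∀ {s t : ℕ}, s ≤ t → F s ≤ F t :=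
    fun {s t} hst => iSup₂_le fun i hi => le_iSup₂ (f := fun (i : Fin n) (_ : (i : ℕ) < t) =>
      MeasurableSpace.comap (X i) inferInstance) i (lt_of_lt_of_le hi hst)
  have hF0 : F 0 = ⊥ := by
    simp [hFdef]
  have hFn : F n = allSigma X := by
    refine le_antisymm (iSup₂_le fun i _ =>
      le_iSup (fun i : Fin n => MeasurableSpace.comap (X i) inferInstance) i) (iSup_le fun i => ?_)
    exact le_iSup₂ (f := fun (i : Fin n) (_ : (i : ℕ) < n) =>
      MeasurableSpace.comap (X i) inferInstance) i i.isLt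
  have hFk_le_G : ∀ k : Fin n, F k ≤ exceptSigma X k := by
    intro k
    refine iSup₂_le fun i hi => le_iSup₂ (f := fun (i : Fin n) (_ : i ≠ k) =>
      MeasurableSpace.comap (X i) inferInstance) i ?_
    intro h
    rw [h] at hi
    exact lt_irrefl _ hi
  have hFsup : ∀ k : Fin n,
      F ((k : ℕ) + 1) = F k ⊔ MeasurableSpace.comap (X k) inferInstance := by
    intro k
    refine le_antisymm (iSup₂_le fun i hi => ?_) (sup_le ?_ ?_)
    · rcases Nat.lt_succ_iff_lt_or_eq.mp hi with h | h
      · exact le_trans (le_iSup₂ (f := fun (i : Fin n) (_ : (i : ℕ) < (k : ℕ)) =>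
          MeasurableSpace.comap (X i) inferInstance) i h) le_sup_left
      · have : i = k := Fin.ext h
        rw [this]
        exact le_sup_right
    · exact iSup₂_le fun i hi => le_iSup₂ (f := fun (i : Fin n) (_ : (i : ℕ) < (k : ℕ) + 1) =>
        MeasurableSpace.comap (X i) inferInstance) i (Nat.lt_succ_of_lt hi)
    · exact le_iSup₂ (f := fun (i : Fin n) (_ : (i : ℕ) < (k : ℕ) + 1) =>
        MeasurableSpace.comap (X i) inferInstance) k (Nat.lt_succ_self _)
  have hIndep : ∀ k : Fin n,
      Indep (exceptSigma X k) (MeasurableSpace.comap (X k) inferInstance) μ := by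
    intro k
    have h := indep_iSup_of_disjoint (m := fun i : Fin n =>
        MeasurableSpace.comap (X i) inferInstance) hcomap_le
      ((iIndepFun_iff_iIndep (fun _ : Fin n => inferInstance) X μ).mp hindep)
      (S := {i : Fin n | i ≠ k}) (T := {k})
      (by simp [Set.disjoint_singleton_right])
    have h2 : (⨆ i ∈ ({k} : Set (Fin n)), MeasurableSpace.comap (X i) inferInstance)
        = MeasurableSpace.comap (X k) inferInstance := by
      simp
    rw [h2] at h
    exact h
  -- Lp setup
  set f₀ : Lp ℝ 2 μ := hξ.toLp ξ with hf₀
  set P : ℕ → Lp ℝ 2 μ := fun t => (condExpL2 ℝ ℝ (hF_le t) f₀ : Lp ℝ 2 μ) with hPdef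
  have hP_eq : ∀ t, μ[ξ | F t] =ᵐ[μ] P t := fun t => condexp_ae_eq_condexpL2'' (hF_le t) hξ
  set D : ℕ → Lp ℝ 2 μ := fun k => P (k + 1) - P k with hDdef
  have hD_meas : ∀ j t : ℕ, j + 1 ≤ t → AEStronglyMeasurable[F t] (D j : Ω → ℝ) μ := by
    intro j t hjt
    refine AEStronglyMeasurable.congr
      (AEStronglyMeasurable.sub
        ((aestronglyMeasurable_condExpL2 (hF_le (j + 1)) f₀).mono (hF_mono hjt))
        ((aestronglyMeasurable_condExpL2 (hF_le j) f₀).mono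
          (hF_mono (le_trans (Nat.le_succ j) hjt))))
      (Lp.coeFn_sub (P (j + 1)) (P j)).symm
  have hinner_fP : ∀ t : ℕ, ∀ g : Lp ℝ 2 μ, AEStronglyMeasurable[F t] (g : Ω → ℝ) μ →
      inner ℝ (P t) g = (inner ℝ f₀ g : ℝ) := by
    intro t g hg
    exact inner_condExpL2_eq_inner_fun (hF_le t) f₀ g hg
  have hDorth : ∀ j k : ℕ, j < k → (inner ℝ (D j) (D k) : ℝ) = 0 := by
    intro j k hjk
    have h1 : (inner ℝ (D j) (P (k + 1)) : ℝ) = inner ℝ (D j) f₀ := by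
      rw [real_inner_comm, hinner_fP (k + 1) (D j) (hD_meas j (k + 1) (le_trans hjk (Nat.le_succ k))),
        real_inner_comm]
    have h2 : (inner ℝ (D j) (P k) : ℝ) = inner ℝ (D j) f₀ := by
      rw [real_inner_comm, hinner_fP k (D j) (hD_meas j k hjk), real_inner_comm]
    rw [hDdef]
    simp only [inner_sub_right]
    rw [h1, h2, sub_self]
  have hPn : P n = f₀ := by
    have hmem : f₀ ∈ lpMeas ℝ ℝ (F n) 2 μ := by
      rw [mem_lpMeas_iff_aestronglyMeasurable]
      exact ⟨ξ, by rw [hFn]; exact hξmeas, hξ.coeFn_toLp⟩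
    show ((condExpL2 ℝ ℝ (hF_le n) f₀ : lpMeas ℝ ℝ (F n) 2 μ) : Lp ℝ 2 μ) = f₀
    rw [condExpL2]
    haveI : Fact (F n ≤ m0) := ⟨hF_le n⟩
    exact Submodule.starProjection_eq_self_iff.mpr hmem
  have hsum : f₀ - P 0 = ∑ k ∈ Finset.range n, D k := by
    have h := Finset.sum_range_sub P n
    rw [hPn] at h
    exact h.symm
  have hnorm : ‖f₀ - P 0‖ ^ 2 = ∑ k ∈ Finset.range n, ‖D k‖ ^ 2 := by
    rw [hsum, ← real_inner_self_eq_norm_sq, inner_sum]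
    refine Finset.sum_congr rfl fun k hk => ?_
    rw [sum_inner, Finset.sum_eq_single k]
    · exact real_inner_self_eq_norm_sq _
    · intro j _ hne
      rcases lt_or_gt_of_ne hne with h | h
      · exact hDorth j k h
      · rw [real_inner_comm]; exact hDorth k j h
    · intro h; exact absurd hk h
  -- variance = ‖f₀ - P 0‖²
  have hP0 : (P 0 : Ω → ℝ) =ᵐ[μ] fun _ => ∫ x, ξ x ∂μ := by
    refine (hP_eq 0).symm.trans ?_
    rw [hF0, condExp_bot]
  have hvar : variance ξ μ = ‖f₀ - P 0‖ ^ 2 := by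
    rw [norm_sq_eq_integral_sq, variance_eq_integral hξ.aemeasurable]
    refine integral_congr_ae ?_
    filter_upwards [hξ.coeFn_toLp, hP0, Lp.coeFn_sub f₀ (P 0)] with ω h1 h2 h3
    rw [h3]
    simp only [Pi.sub_apply, hf₀, h1, h2]
  -- per-term bound
  have hterm : ∀ k : Fin n, ‖D (k : ℕ)‖ ^ 2 ≤
      ∫ ω, |ξ ω - (μ[ξ | exceptSigma X k]) ω| ^ 2 ∂μ := by
    intro k
    set η : Ω → ℝ := μ[ξ | exceptSigma X k] with hη
    have hη_int : Integrable η μ := integrable_condExp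
    have hη2 : MemLp η 2 μ := memℒp_two_condexp (hG_le k) hξ
    set h : Ω → ℝ := ξ - η with hh
    have hh2 : MemLp h 2 μ := hξ.sub hη2
    have hc2 : μ[η | F ((k : ℕ) + 1)] =ᵐ[μ] μ[ξ | F (k : ℕ)] := by
      have e1 : μ[η | F ((k : ℕ) + 1)]
          =ᵐ[μ] μ[η | F (k : ℕ) ⊔ MeasurableSpace.comap (X k) inferInstance] := by
        rw [hFsup k]
      have e2 : μ[η | F (k : ℕ) ⊔ MeasurableSpace.comap (X k) inferInstance]
          =ᵐ[μ] μ[η | F (k : ℕ)] :=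
        condexp_sup_indep' (hG_le k) (hcomap_le k) (hFk_le_G k) (hIndep k) hη_int
          stronglyMeasurable_condExp
      have e3 : μ[η | F (k : ℕ)] =ᵐ[μ] μ[ξ | F (k : ℕ)] :=
        condExp_condExp_of_le (hFk_le_G k) (hG_le k)
      exact (e1.trans e2).trans e3
    have hA : μ[h | F ((k : ℕ) + 1)] =ᵐ[μ] (D (k : ℕ) : Ω → ℝ) := by
      have c1 : μ[h | F ((k : ℕ) + 1)]
          =ᵐ[μ] μ[ξ | F ((k : ℕ) + 1)] - μ[η | F ((k : ℕ) + 1)] :=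
        condExp_sub hξ_int hη_int _
      have c3 : (μ[ξ | F ((k : ℕ) + 1)] - μ[η | F ((k : ℕ) + 1)] : Ω → ℝ)
          =ᵐ[μ] (D (k : ℕ) : Ω → ℝ) := by
        filter_upwards [hP_eq ((k : ℕ) + 1), hc2, hP_eq (k : ℕ),
          Lp.coeFn_sub (P ((k : ℕ) + 1)) (P (k : ℕ))] with ω h1 h2 h3 h4
        simp only [Pi.sub_apply] at *
        rw [h1, h2, h3]
        exact h4.symm
      exact c1.trans c3
    have hDeq : D (k : ℕ) = (condExpL2 ℝ ℝ (hF_le ((k : ℕ) + 1)) (hh2.toLp h) : Lp ℝ 2 μ) := by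
      exact Lp.ext <| hA.symm.trans (condexp_ae_eq_condexpL2'' (hF_le ((k : ℕ) + 1)) hh2)
    have hle : ‖D (k : ℕ)‖ ≤ ‖hh2.toLp h‖ := by
      rw [hDeq]
      exact norm_condExpL2_coe_le (hF_le ((k : ℕ) + 1)) _
    have hsq : ‖hh2.toLp h‖ ^ 2 = ∫ ω, |ξ ω - η ω| ^ 2 ∂μ := by
      rw [norm_sq_eq_integral_sq]
      refine integral_congr_ae ?_
      filter_upwards [hh2.coeFn_toLp] with ω h1
      rw [h1, hh]
      simp [sq_abs]
    calc ‖D (k : ℕ)‖ ^ 2 ≤ ‖hh2.toLp h‖ ^ 2 :=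
          pow_le_pow_left₀ (norm_nonneg _) hle 2
      _ = ∫ ω, |ξ ω - η ω| ^ 2 ∂μ := hsq
  calc variance ξ μ = (∑ k ∈ Finset.range n, ‖D k‖ ^ 2) := by rw [hvar, hnorm]
    _ = (∑ k : Fin n, ‖D (k : ℕ)‖ ^ 2) := by rw [Finset.sum_range]
    _ ≤ ∑ k : Fin n, ∫ ω, |ξ ω - (μ[ξ | exceptSigma X k]) ω| ^ 2 ∂μ :=
        Finset.sum_le_sum fun k _ => hterm k
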